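/- Let W be a tournament kernel on a probability space (S, μ), let Z be the associated collection of sets, and define ν(A×B×C) = ∫_{A×B×C} W(x,y)W(y,z)W(z,x) dμ(x)dμ(y)dμ(z) for measurable A, B, C ⊆ S. Then: (a) if A_1, A_2, A_3 ∈ Z and μ(A_i ∩ A_j) = 0 for some i ≠ j, then ν(A_1 × A_2 × A_3) = 0; (b) for all A, B, C ∈ Z, ν(A × B × C) ≤ μ(A ∩ B ∩ C)³. -/

import Mathlib

open MeasureTheory

/-- A tournament kernel on a probability space `(S, μ)`. -/
def IsTournamentKernel {S : Type*} [MeasurableSpace S] (μ : Measure S)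
    (W : S → S → ℝ) : Prop :=
  Measurable (Function.uncurry W) ∧ (∀ x y : S, 0 ≤ W x y ∧ W x y ≤ 1) ∧
  (∀ᵐ p ∂(μ.prod μ), W p.1 p.2 + W p.2 p.1 = 1)

/-- `A ≺ B`: `W = 1` almost everywhere on `A × B`. -/
def KPrec {S : Type*} [MeasurableSpace S] (μ : Measure S) (W : S → S → ℝ)
    (A B : Set S) : Prop :=
  ∀ᵐ p ∂(μ.prod μ), p.1 ∈ A → p.2 ∈ B → W p.1 p.2 = 1

/-- The collection `Z`: measurable sets `A` admitting a partition `{B, C}` of the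
complement of `A` with `B ≺ A`, `A ≺ C` and `B ≺ C`. -/
def memZ {S : Type*} [MeasurableSpace S] (μ : Measure S) (W : S → S → ℝ)
    (A : Set S) : Prop :=
  MeasurableSet A ∧ ∃ B C : Set S, MeasurableSet B ∧ MeasurableSet C ∧
    B ∪ C = Aᶜ ∧ B ∩ C = ∅ ∧ KPrec μ W B A ∧ KPrec μ W A C ∧ KPrec μ W B C

/-- Pairwise facts about `W` relative to the partition `B, A, C`. -/
def Qs {S : Type*} (W : S → S → ℝ) (A B C : Set S) (u v : S) : Prop :=
  (W u v + W v u = 1) ∧ (u ∈ B → v ∈ A → W u v = 1) ∧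
    (u ∈ A → v ∈ C → W u v = 1) ∧ (u ∈ B → v ∈ C → W u v = 1)

/-- A "backward" edge has weight zero. -/
lemma wzero {S : Type*} (W : S → S → ℝ) (A B C : Set S) (u v : S)
    (hq : Qs W A B C u v) (hq' : Qs W A B C v u)
    (h : (u ∈ A ∧ v ∈ B) ∨ (u ∈ C ∧ v ∈ A) ∨ (u ∈ C ∧ v ∈ B)) : W u v = 0 := by
  rcases h with ⟨hu, hv⟩ | ⟨hu, hv⟩ | ⟨hu, hv⟩
  · have := hq'.2.1 hv hu; linarith [hq.1]
  · have := hq'.2.2.1 hv hu; linarith [hq.1]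
  · have := hq'.2.2.2 hv hu; linarith [hq.1]

/-- If `x ∈ A` but not both `y, z ∈ A`, the cyclic product vanishes. -/
lemma cycle_zero {S : Type*} (W : S → S → ℝ) (A B C : Set S)
    (hU : B ∪ C = Aᶜ) (x y z : S)
    (qxy : Qs W A B C x y) (qyx : Qs W A B C y x)
    (qyz : Qs W A B C y z) (qzy : Qs W A B C z y)
    (qzx : Qs W A B C z x) (qxz : Qs W A B C x z)
    (hx : x ∈ A) (h : y ∉ A ∨ z ∉ A) :
    W x y * W y z * W z x = 0 := by
  have mem' : ∀ u : S, u ∉ A → u ∈ B ∨ u ∈ C := by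
    intro u hu
    have : u ∈ B ∪ C := by rw [hU]; exact hu
    exact this
  by_cases hy : y ∈ A
  · have hz : z ∉ A := by tauto
    rcases mem' z hz with hzB | hzC
    · have : W y z = 0 := wzero W A B C y z qyz qzy (Or.inl ⟨hy, hzB⟩)
      rw [this]; ring
    · have : W z x = 0 := wzero W A B C z x qzx qxz (Or.inr (Or.inl ⟨hzC, hx⟩))
      rw [this]; ring
  · rcases mem' y hy with hyB | hyC
    · have : W x y = 0 := wzero W A B C x y qxy qyx (Or.inl ⟨hx, hyB⟩)
      rw [this]; ring
    · by_cases hz : z ∈ A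
      · have : W y z = 0 := wzero W A B C y z qyz qzy (Or.inr (Or.inl ⟨hyC, hz⟩))
        rw [this]; ring
      · rcases mem' z hz with hzB | hzC
        · have : W y z = 0 := wzero W A B C y z qyz qzy (Or.inr (Or.inr ⟨hyC, hzB⟩))
          rw [this]; ring
        · have : W z x = 0 := wzero W A B C z x qzx qxz (Or.inr (Or.inl ⟨hzC, hx⟩))
          rw [this]; ring

lemma triple_nonneg {S : Type*} [MeasurableSpace S] (μ : Measure S)
    (W : S → S → ℝ) (hW01 : ∀ x y : S, 0 ≤ W x y ∧ W x y ≤ 1) (A1 A2 A3 : Set S) :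
    0 ≤ ∫ x in A1, ∫ y in A2, ∫ z in A3, W x y * W y z * W z x ∂μ ∂μ ∂μ :=
  integral_nonneg fun x => integral_nonneg fun y => integral_nonneg fun z =>
    mul_nonneg (mul_nonneg (hW01 x y).1 (hW01 y z).1) (hW01 z x).1

lemma key_bound {S : Type*} [MeasurableSpace S] (μ : Measure S) [IsProbabilityMeasure μ]
    (W : S → S → ℝ) (hW : IsTournamentKernel μ W)
    (A1 A2 A3 : Set S) (hZ1 : memZ μ W A1) (hZ2 : memZ μ W A2) (hZ3 : memZ μ W A3) :
    (∫ x in A1, ∫ y in A2, ∫ z in A3, W x y * W y z * W z x ∂μ ∂μ ∂μ) ≤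
      (μ (A1 ∩ A2 ∩ A3)).toReal ^ 3 := by
  obtain ⟨mA1, B1, C1, mB1, mC1, hU1, hI1, pBA1, pAC1, pBC1⟩ := hZ1
  obtain ⟨mA2, B2, C2, mB2, mC2, hU2, hI2, pBA2, pAC2, pBC2⟩ := hZ2
  obtain ⟨mA3, B3, C3, mB3, mC3, hU3, hI3, pBA3, pAC3, pBC3⟩ := hZ3
  set K : Set S := A1 ∩ A2 ∩ A3 with hK
  have hKmeas : MeasurableSet K := (mA1.inter mA2).inter mA3
  set iK : S → ℝ := K.indicator (fun _ => (1 : ℝ)) with hiK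
  set c : ℝ := (μ K).toReal with hc
  have hiKnn : ∀ u, 0 ≤ iK u := fun u => Set.indicator_nonneg (fun _ _ => zero_le_one) u
  have hW01 := hW.2.1
  -- the big pairwise a.e. statement
  set Qf : S → S → Prop :=
    fun u v => Qs W A1 B1 C1 u v ∧ Qs W A2 B2 C2 u v ∧ Qs W A3 B3 C3 u v with hQf
  have Hpair : ∀ᵐ p ∂(μ.prod μ), Qf p.1 p.2 := by
    filter_upwards [hW.2.2, pBA1, pAC1, pBC1, pBA2, pAC2, pBC2, pBA3, pAC3, pBC3]
      with p h0 h1 h2 h3 h4 h5 h6 h7 h8 h9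
    exact ⟨⟨h0, h1, h2, h3⟩, ⟨h0, h4, h5, h6⟩, ⟨h0, h7, h8, h9⟩⟩
  have Hswap : ∀ᵐ p ∂(μ.prod μ), Qf p.2 p.1 := by
    have hmp : MeasurePreserving Prod.swap (μ.prod μ) (μ.prod μ) :=
      Measure.measurePreserving_swap
    have := ae_of_ae_map (f := (Prod.swap : S × S → S × S))
      measurable_swap.aemeasurable (p := fun p : S × S => Qf p.1 p.2)
      (by rw [hmp.map_eq]; exact Hpair)
    exact this
  have Hboth : ∀ᵐ x ∂μ, ∀ᵐ y ∂μ, Qf x y ∧ Qf y x :=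
    Measure.ae_ae_of_ae_prod (Hpair.and Hswap)
  have H : ∀ᵐ x ∂μ, ∀ᵐ y ∂μ, ∀ᵐ z ∂μ,
      (Qf x y ∧ Qf y x) ∧ (Qf y z ∧ Qf z y) ∧ (Qf x z ∧ Qf z x) := by
    filter_upwards [Hboth] with x hx
    filter_upwards [hx, Hboth, Filter.Eventually.of_forall fun _ => hx] with y hxy hy hx'
    filter_upwards [hy, hx'] with z hyz hxz
    exact ⟨hxy, hyz, hxz⟩
  -- a.e. pointwise bound by the indicator product
  have Hg : ∀ᵐ x ∂μ, ∀ᵐ y ∂μ, ∀ᵐ z ∂μ, x ∈ A1 → y ∈ A2 → z ∈ A3 →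
      W x y * W y z * W z x ≤ iK x * iK y * iK z := by
    filter_upwards [H] with x hx
    filter_upwards [hx] with y hxy
    filter_upwards [hxy] with z hq
    intro hx1 hy2 hz3
    obtain ⟨⟨qxy, qyx⟩, ⟨qyz, qzy⟩, ⟨qxz, qzx⟩⟩ := hq
    by_cases hk : x ∈ K ∧ y ∈ K ∧ z ∈ K
    · have e1 : iK x = 1 := Set.indicator_of_mem hk.1 _
      have e2 : iK y = 1 := Set.indicator_of_mem hk.2.1 _
      have e3 : iK z = 1 := Set.indicator_of_mem hk.2.2 _
      rw [e1, e2, e3]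
      have h1 := hW01 x y; have h2 := hW01 y z; have h3 := hW01 z x
      have hb1 : W x y * W y z ≤ 1 := mul_le_one₀ h1.2 h2.1 h2.2
      have hb0 : 0 ≤ W x y * W y z := mul_nonneg h1.1 h2.1
      have hb2 : W x y * W y z * W z x ≤ 1 := mul_le_one₀ hb1 h3.1 h3.2
      linarith
    · have hcase : (y ∉ A1 ∨ z ∉ A1) ∨ (z ∉ A2 ∨ x ∉ A2) ∨ (x ∉ A3 ∨ y ∉ A3) := by
        by_contra hcon
        push_neg at hcon
        exact hk ⟨⟨⟨hx1, hcon.2.1.2⟩, hcon.2.2.1⟩,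
          ⟨⟨hcon.1.1, hy2⟩, hcon.2.2.2⟩, ⟨⟨hcon.1.2, hcon.2.1.1⟩, hz3⟩⟩
      have hz0 : W x y * W y z * W z x = 0 := by
        rcases hcase with h | h | h
        · exact cycle_zero W A1 B1 C1 hU1 x y z qxy.1 qyx.1 qyz.1 qzy.1 qzx.1 qxz.1 hx1 h
        · have := cycle_zero W A2 B2 C2 hU2 y z x qyz.2.1 qzy.2.1 qzx.2.1 qxz.2.1
            qxy.2.1 qyx.2.1 hy2 h
          linear_combination this
        · have := cycle_zero W A3 B3 C3 hU3 z x y qzx.2.2 qxz.2.2 qxy.2.2 qyx.2.2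
            qyz.2.2 qzy.2.2 hz3 h
          linear_combination this
      rw [hz0]
      exact mul_nonneg (mul_nonneg (hiKnn x) (hiKnn y)) (hiKnn z)
  -- indicator integrals
  have hKsub1 : K ⊆ A1 := fun u hu => hu.1.1
  have hKsub2 : K ⊆ A2 := fun u hu => hu.1.2
  have hKsub3 : K ⊆ A3 := fun u hu => hu.2
  have hint : ∀ (A : Set S), MeasurableSet A → K ⊆ A → ∫ u in A, iK u ∂μ = c := by
    intro A mA hsub
    rw [hiK, integral_indicator_const (1 : ℝ) hKmeas, measureReal_restrict_apply hKmeas,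
      Set.inter_eq_left.mpr hsub, smul_eq_mul, mul_one, measureReal_def]
  have hiKint : ∀ (A : Set S), MeasurableSet A → Integrable iK (μ.restrict A) := by
    intro A mA
    exact (integrable_const (1 : ℝ)).indicator hKmeas
  -- the chain of integral bounds
  have E3 : ∀ x y : S, ∫ z in A3, iK x * iK y * iK z ∂μ = iK x * iK y * c := by
    intro x y
    rw [MeasureTheory.integral_const_mul, hint A3 mA3 hKsub3]
  have E2 : ∀ x : S, ∫ y in A2, iK x * iK y * c ∂μ = iK x * c * c := by
    intro x
    have : (fun y => iK x * iK y * c) = fun y => (iK x * c) * iK y := by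
      funext y; ring
    rw [this, MeasureTheory.integral_const_mul, hint A2 mA2 hKsub2]
  have E1 : ∫ x in A1, iK x * c * c ∂μ = c ^ 3 := by
    have : (fun x => iK x * c * c) = fun x => (c * c) * iK x := by
      funext x; ring
    rw [this, MeasureTheory.integral_const_mul, hint A1 mA1 hKsub1]
    ring
  have int3 : ∀ x y : S, Integrable (fun z => iK x * iK y * iK z) (μ.restrict A3) :=
    fun x y => (hiKint A3 mA3).const_mul _
  have int2 : ∀ x : S, Integrable (fun y => iK x * iK y * c) (μ.restrict A2) := by
    intro x
    have : (fun y => iK x * iK y * c) = fun y => (iK x * c) * iK y := by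
      funext y; ring
    rw [this]
    exact (hiKint A2 mA2).const_mul _
  have int1 : Integrable (fun x => iK x * c * c) (μ.restrict A1) := by
    have : (fun x => iK x * c * c) = fun x => (c * c) * iK x := by
      funext x; ring
    rw [this]
    exact (hiKint A1 mA1).const_mul _
  have gnn : ∀ x y z : S, 0 ≤ W x y * W y z * W z x := fun x y z =>
    mul_nonneg (mul_nonneg (hW01 x y).1 (hW01 y z).1) (hW01 z x).1
  have Hstep : ∀ᵐ x ∂μ, x ∈ A1 →
      (∫ y in A2, ∫ z in A3, W x y * W y z * W z x ∂μ ∂μ) ≤ iK x * c * c := by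
    filter_upwards [Hg] with x hx hx1
    have hb : ∀ᵐ y ∂(μ.restrict A2),
        (∫ z in A3, W x y * W y z * W z x ∂μ) ≤ iK x * iK y * c := by
      filter_upwards [ae_restrict_of_ae hx, ae_restrict_mem mA2] with y hy hy2
      calc (∫ z in A3, W x y * W y z * W z x ∂μ)
          ≤ ∫ z in A3, iK x * iK y * iK z ∂μ := by
            apply integral_mono_of_nonneg
            · exact Filter.Eventually.of_forall fun z => gnn x y z
            · exact int3 x y
            · filter_upwards [ae_restrict_of_ae hy, ae_restrict_mem mA3] with z hz hz3
              exact hz hx1 hy2 hz3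
        _ = iK x * iK y * c := E3 x y
    calc (∫ y in A2, ∫ z in A3, W x y * W y z * W z x ∂μ ∂μ)
        ≤ ∫ y in A2, iK x * iK y * c ∂μ := by
          apply integral_mono_of_nonneg
          · exact Filter.Eventually.of_forall fun y => integral_nonneg fun z => gnn x y z
          · exact int2 x
          · exact hb
      _ = iK x * c * c := E2 x
  calc (∫ x in A1, ∫ y in A2, ∫ z in A3, W x y * W y z * W z x ∂μ ∂μ ∂μ)
      ≤ ∫ x in A1, iK x * c * c ∂μ := by
        apply integral_mono_of_nonneg
        · exact Filter.Eventually.of_forall fun x =>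
            integral_nonneg fun y => integral_nonneg fun z => gnn x y z
        · exact int1
        · filter_upwards [ae_restrict_of_ae Hstep, ae_restrict_mem mA1] with x hx hx1
          exact hx hx1
    _ = c ^ 3 := E1

/-- Bounds for `ν(A × B × C) = ∫_{A×B×C} W(x,y) W(y,z) W(z,x) dμ³` on elements of `Z`:
(a) it vanishes whenever two of the three sets essentially do not meet;
(b) in general it is at most `μ(A ∩ B ∩ C)³`. -/
theorem stmt16 {S : Type*} [MeasurableSpace S] (μ : Measure S) [IsProbabilityMeasure μ]
    (W : S → S → ℝ) (hW : IsTournamentKernel μ W) :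
    (∀ A1 A2 A3 : Set S, memZ μ W A1 → memZ μ W A2 → memZ μ W A3 →
      (μ (A1 ∩ A2) = 0 ∨ μ (A1 ∩ A3) = 0 ∨ μ (A2 ∩ A3) = 0) →
      (∫ x in A1, ∫ y in A2, ∫ z in A3, W x y * W y z * W z x ∂μ ∂μ ∂μ) = 0) ∧
    (∀ A B C : Set S, memZ μ W A → memZ μ W B → memZ μ W C →
      (∫ x in A, ∫ y in B, ∫ z in C, W x y * W y z * W z x ∂μ ∂μ ∂μ) ≤
        (μ (A ∩ B ∩ C)).toReal ^ 3) := by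
  constructor
  · intro A1 A2 A3 hZ1 hZ2 hZ3 hnull
    have hb := key_bound μ W hW A1 A2 A3 hZ1 hZ2 hZ3
    have hK0 : μ (A1 ∩ A2 ∩ A3) = 0 := by
      rcases hnull with h | h | h
      · exact measure_mono_null Set.inter_subset_left h
      · have hsub : A1 ∩ A2 ∩ A3 ⊆ A1 ∩ A3 := fun u hu => ⟨hu.1.1, hu.2⟩
        exact measure_mono_null hsub h
      · have hsub : A1 ∩ A2 ∩ A3 ⊆ A2 ∩ A3 := fun u hu => ⟨hu.1.2, hu.2⟩
        exact measure_mono_null hsub h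
    rw [hK0] at hb
    simp only [ENNReal.toReal_zero] at hb
    have hb' : (∫ x in A1, ∫ y in A2, ∫ z in A3, W x y * W y z * W z x ∂μ ∂μ ∂μ) ≤ 0 := by
      simpa using hb
    exact le_antisymm hb' (triple_nonneg μ W hW.2.1 A1 A2 A3)
  · intro A B C hA hB hC
    exact key_bound μ W hW A B C hA hB hC
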